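/- For n ≥ 2, the number of SIF permutations σ of [n] such that deleting n from its cycle yields a SIF permutation of [n-1] equals (n-1)·a_{n-1}, where a_{n-1} is the number of SIF permutations of [n-1]; the map (σ_{n-1}, i) ↦ (insert n after i in σ_{n-1}) is a bijection from pairs of a SIF permutation of [n-1] and an element i ∈ [n-1] onto this set. -/
import Mathlib


def Stab {n : ℕ} (σ : Equiv.Perm (Fin n)) (S : Finset (Fin n)) : Prop :=
  S.image σ = S

def SIF {n : ℕ} (σ : Equiv.Perm (Fin n)) : Prop :=
  ∀ a b : Fin n, (Finset.Icc a b).Nonempty → Finset.Icc a b ≠ Finset.univ →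
    ¬ Stab σ (Finset.Icc a b)

/-- `σ'` is obtained from `σ` by inserting the largest element `n` into the cycle of `σ`
after `i` : `σ'(i) = n`, `σ'(n) = σ(i)`, `σ'(j) = σ(j)` otherwise. -/
def InsertTop {n : ℕ} (σ : Equiv.Perm (Fin n)) (i : Fin n)
    (σ' : Equiv.Perm (Fin (n + 1))) : Prop :=
  σ' (Fin.castSucc i) = Fin.last n ∧ σ' (Fin.last n) = Fin.castSucc (σ i) ∧
    ∀ j : Fin n, j ≠ i → σ' (Fin.castSucc j) = Fin.castSucc (σ j)

/-- `τ` is obtained from `σ'` by deleting the largest element `n` from its cycle. -/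
def DeleteTop {n : ℕ} (σ' : Equiv.Perm (Fin (n + 1))) (τ : Equiv.Perm (Fin n)) : Prop :=
  ∀ j : Fin n, (τ j : ℕ) =
    if σ' (Fin.castSucc j) = Fin.last n then (σ' (Fin.last n) : ℕ)
    else (σ' (Fin.castSucc j) : ℕ)


section Aux

open Fin Equiv

variable {n : ℕ}

lemma stab_iff (σ : Equiv.Perm (Fin n)) (S : Finset (Fin n)) :
    Stab σ S ↔ ∀ x ∈ S, σ x ∈ S := by
  constructor
  · intro h x hx
    rw [Stab] at h
    rw [← h]
    exact Finset.mem_image_of_mem _ hx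
  · intro h
    apply Finset.eq_of_subset_of_card_le
    · intro y hy
      obtain ⟨x, hx, rfl⟩ := Finset.mem_image.mp hy
      exact h x hx
    · rw [Finset.card_image_of_injective _ σ.injective]

def extPerm (σ : Equiv.Perm (Fin n)) : Equiv.Perm (Fin (n + 1)) :=
  (finSuccEquivLast (n := n)).symm.permCongr σ.optionCongr

lemma extPerm_castSucc (σ : Equiv.Perm (Fin n)) (j : Fin n) :
    extPerm σ (castSucc j) = castSucc (σ j) := by
  simp [extPerm, Equiv.permCongr_apply]

lemma extPerm_last (σ : Equiv.Perm (Fin n)) : extPerm σ (last n) = last n := by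
  simp [extPerm, Equiv.permCongr_apply]

def ins (σ : Equiv.Perm (Fin n)) (i : Fin n) : Equiv.Perm (Fin (n + 1)) :=
  Equiv.swap (castSucc (σ i)) (last n) * extPerm σ

lemma ins_insertTop (σ : Equiv.Perm (Fin n)) (i : Fin n) : InsertTop σ i (ins σ i) := by
  refine ⟨?_, ?_, ?_⟩
  · simp [ins, extPerm_castSucc, Equiv.swap_apply_left]
  · simp [ins, extPerm_last, Equiv.swap_apply_right]
  · intro j hj
    simp only [ins, Equiv.Perm.mul_apply, extPerm_castSucc]
    exact Equiv.swap_apply_of_ne_of_ne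
      (by simp [Fin.castSucc_inj, σ.injective.ne hj]) (Fin.castSucc_lt_last _).ne

lemma insertTop_unique (σ : Equiv.Perm (Fin n)) (i : Fin n) {σ' : Equiv.Perm (Fin (n + 1))}
    (h : InsertTop σ i σ') : σ' = ins σ i := by
  obtain ⟨h1, h2, h3⟩ := h
  obtain ⟨g1, g2, g3⟩ := ins_insertTop σ i
  ext x
  induction x using Fin.lastCases with
  | last => rw [h2, g2]
  | cast j =>
    by_cases hj : j = i
    · subst hj; rw [h1, g1]
    · rw [h3 j hj, g3 j hj]

noncomputable def delFun (σ' : Equiv.Perm (Fin (n + 1))) : Fin n → Fin n := fun j =>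
  if h : σ' (castSucc j) = last n then
    ⟨(σ' (last n) : ℕ), Fin.val_lt_last (fun he => (Fin.castSucc_lt_last j).ne
      (σ'.injective (h.trans he.symm)))⟩
  else ⟨(σ' (castSucc j) : ℕ), Fin.val_lt_last h⟩

lemma delFun_inj (σ' : Equiv.Perm (Fin (n + 1))) : Function.Injective (delFun σ') := by
  intro j1 j2 he
  have hv := congrArg Fin.val he
  unfold delFun at hv
  split_ifs at hv with h1 h2 h2
  · exact Fin.castSucc_injective n (σ'.injective (h1.trans h2.symm))
  · exact absurd (σ'.injective (Fin.val_injective hv)) (Fin.castSucc_lt_last j2).ne'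
  · exact absurd (σ'.injective (Fin.val_injective hv)) (Fin.castSucc_lt_last j1).ne
  · exact Fin.castSucc_injective n (σ'.injective (Fin.val_injective hv))

noncomputable def del (σ' : Equiv.Perm (Fin (n + 1))) : Equiv.Perm (Fin n) :=
  Equiv.ofBijective _ (Finite.injective_iff_bijective.mp (delFun_inj σ'))

lemma del_deleteTop (σ' : Equiv.Perm (Fin (n + 1))) : DeleteTop σ' (del σ') := by
  intro j
  show (delFun σ' j : ℕ) = _
  unfold delFun
  split_ifs <;> rfl

lemma deleteTop_unique {σ' : Equiv.Perm (Fin (n + 1))} {τ₁ τ₂ : Equiv.Perm (Fin n)}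
    (h1 : DeleteTop σ' τ₁) (h2 : DeleteTop σ' τ₂) : τ₁ = τ₂ := by
  ext j
  rw [h1 j, h2 j]

lemma deleteTop_of_insertTop {σ : Equiv.Perm (Fin n)} {i : Fin n}
    {σ' : Equiv.Perm (Fin (n + 1))} (h : InsertTop σ i σ') : DeleteTop σ' σ := by
  obtain ⟨h1, h2, h3⟩ := h
  intro j
  by_cases hj : j = i
  · subst hj
    rw [if_pos h1, h2]
    simp
  · rw [h3 j hj, if_neg (Fin.castSucc_lt_last _).ne]
    simp

lemma insertTop_of_deleteTop {σ' : Equiv.Perm (Fin (n + 1))} {τ : Equiv.Perm (Fin n)}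
    (hd : DeleteTop σ' τ) {i : Fin n} (hi : σ' (castSucc i) = last n) : InsertTop τ i σ' := by
  refine ⟨hi, ?_, ?_⟩
  · apply Fin.val_injective
    show (σ' (last n) : ℕ) = ((castSucc (τ i)) : ℕ)
    rw [Fin.coe_castSucc, hd i, if_pos hi]
  · intro j hj
    have hne : σ' (castSucc j) ≠ last n := fun he =>
      hj (Fin.castSucc_injective n (σ'.injective (he.trans hi.symm)))
    apply Fin.val_injective
    show (σ' (castSucc j) : ℕ) = ((castSucc (τ j)) : ℕ)
    rw [Fin.coe_castSucc, hd j, if_neg hne]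

lemma sif_insertTop (hn : 1 ≤ n) {σ : Equiv.Perm (Fin n)} (hσ : SIF σ) {i : Fin n}
    {σ' : Equiv.Perm (Fin (n + 1))} (h : InsertTop σ i σ') : SIF σ' := by
  obtain ⟨h1, h2, h3⟩ := h
  intro a b hne hnu hstab
  rw [stab_iff] at hstab
  by_cases hb : b = last n
  · subst hb
    have ha0 : a ≠ 0 := by
      rintro rfl
      apply hnu
      ext x
      simp [Fin.zero_le, Fin.le_last]
    have hal : a ≠ last n := by
      rintro rfl
      have := hstab (last n) (by simp)
      rw [h2] at this
      simp only [Finset.mem_Icc, Fin.le_last, and_true] at this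
      exact absurd (le_antisymm (Fin.le_last _) this) (Fin.castSucc_lt_last _).ne
    obtain ⟨a₀, rfl⟩ := Fin.exists_castSucc_eq.mpr hal
    set b₀ : Fin n := ⟨n - 1, by omega⟩ with hb₀def
    have hmemT : ∀ j : Fin n, j ∈ Finset.Icc a₀ b₀ ↔ a₀ ≤ j := by
      intro j
      have := j.isLt
      simp only [Finset.mem_Icc, and_iff_left_iff_imp]
      intro _
      exact Fin.le_def.mpr (by simp [hb₀def]; omega)
    have hmemS : ∀ x : Fin (n + 1),
        x ∈ Finset.Icc (castSucc a₀) (last n) ↔ castSucc a₀ ≤ x := by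
      intro x
      simp [Finset.mem_Icc, Fin.le_last]
    have hσi : castSucc a₀ ≤ castSucc (σ i) := by
      have := hstab (last n) ((hmemS _).mpr (Fin.le_last _))
      rw [h2, hmemS] at this
      exact this
    have hstabT : Stab σ (Finset.Icc a₀ b₀) := by
      rw [stab_iff]
      intro j hj
      rw [hmemT] at hj ⊢
      by_cases hji : j = i
      · subst hji
        exact Fin.castSucc_le_castSucc_iff.mp hσi
      · have := hstab (castSucc j) ((hmemS _).mpr (Fin.castSucc_le_castSucc_iff.mpr hj))
        rw [h3 j hji, hmemS] at this
        exact Fin.castSucc_le_castSucc_iff.mp this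
    refine hσ a₀ b₀ ⟨a₀, (hmemT a₀).mpr le_rfl⟩ ?_ hstabT
    intro hu
    have h0 : (⟨0, hn⟩ : Fin n) ∈ Finset.Icc a₀ b₀ := hu ▸ Finset.mem_univ _
    rw [hmemT] at h0
    apply ha0
    apply Fin.ext
    have := Fin.le_def.mp h0
    simpa using Nat.le_zero.mp this
  · obtain ⟨b₀, rfl⟩ := Fin.exists_castSucc_eq.mpr hb
    have hab : a ≤ castSucc b₀ := Finset.nonempty_Icc.mp hne
    have hal : a ≠ last n := by
      intro he
      rw [he] at hab
      exact absurd (le_antisymm hab (Fin.le_last _)) (Fin.castSucc_lt_last _).ne'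
    obtain ⟨a₀, rfl⟩ := Fin.exists_castSucc_eq.mpr hal
    have hmem : ∀ j : Fin n, j ∈ Finset.Icc a₀ b₀ ↔
        castSucc j ∈ Finset.Icc (castSucc a₀) (castSucc b₀) := by
      intro j
      simp [Finset.mem_Icc, Fin.castSucc_le_castSucc_iff]
    have hiS : castSucc i ∉ Finset.Icc (castSucc a₀) (castSucc b₀) := by
      intro hmemi
      have := hstab _ hmemi
      rw [h1, Finset.mem_Icc] at this
      exact absurd (le_antisymm this.2 (Fin.le_last _)).symm (Fin.castSucc_lt_last _).ne
    have hstabT : Stab σ (Finset.Icc a₀ b₀) := by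
      rw [stab_iff]
      intro j hj
      rw [hmem] at hj ⊢
      have hji : j ≠ i := by rintro rfl; exact hiS hj
      rw [← h3 j hji]
      exact hstab _ hj
    refine hσ a₀ b₀ (Finset.nonempty_Icc.mpr (Fin.castSucc_le_castSucc_iff.mp hab)) ?_ hstabT
    intro hu
    exact hiS ((hmem i).mp (hu ▸ Finset.mem_univ _))

end Aux

/-- The SIF permutations `σ'` of `[n]` (modeled as `Fin (n+1)`, ambient size `n+1 ≥ 2`) such
that deleting the largest element from its cycle yields a SIF permutation of `[n-1]` number
exactly `(n-1)·a_{n-1}` (here `n · a_n` in the shifted indexing), and the insertion map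
`(σ, i) ↦ (insert the largest element after i in σ)` is a bijection from pairs of a SIF
permutation of `[n-1]` and an element `i ∈ [n-1]` onto this set. -/
theorem stmt19 (n : ℕ) (hn : 1 ≤ n) :
    Nat.card {σ' : Equiv.Perm (Fin (n + 1)) //
        SIF σ' ∧ ∀ τ : Equiv.Perm (Fin n), DeleteTop σ' τ → SIF τ} =
      n * Nat.card {σ : Equiv.Perm (Fin n) // SIF σ} ∧
    (∀ (σ : Equiv.Perm (Fin n)), SIF σ → ∀ i : Fin n,
      ∃! σ' : Equiv.Perm (Fin (n + 1)), InsertTop σ i σ') ∧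
    (∀ (σ : Equiv.Perm (Fin n)), SIF σ → ∀ i : Fin n,
      ∀ σ' : Equiv.Perm (Fin (n + 1)), InsertTop σ i σ' →
        SIF σ' ∧ ∀ τ : Equiv.Perm (Fin n), DeleteTop σ' τ → SIF τ) ∧
    (∀ σ' : Equiv.Perm (Fin (n + 1)),
      (SIF σ' ∧ ∀ τ : Equiv.Perm (Fin n), DeleteTop σ' τ → SIF τ) →
        ∃! p : {q : Equiv.Perm (Fin n) × Fin n // SIF q.1}, InsertTop p.1.1 p.1.2 σ') := by
  have key2 : ∀ (σ : Equiv.Perm (Fin n)) (i : Fin n),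
      ∃! σ' : Equiv.Perm (Fin (n + 1)), InsertTop σ i σ' :=
    fun σ i => ⟨ins σ i, ins_insertTop σ i, fun _ h => insertTop_unique σ i h⟩
  have key3 : ∀ (σ : Equiv.Perm (Fin n)), SIF σ → ∀ i : Fin n,
      ∀ σ' : Equiv.Perm (Fin (n + 1)), InsertTop σ i σ' →
        SIF σ' ∧ ∀ τ : Equiv.Perm (Fin n), DeleteTop σ' τ → SIF τ := by
    intro σ hσ i σ' h
    refine ⟨sif_insertTop hn hσ h, fun τ hτ => ?_⟩
    rwa [deleteTop_unique hτ (deleteTop_of_insertTop h)]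
  have key4 : ∀ σ' : Equiv.Perm (Fin (n + 1)),
      (SIF σ' ∧ ∀ τ : Equiv.Perm (Fin n), DeleteTop σ' τ → SIF τ) →
        ∃! p : {q : Equiv.Perm (Fin n) × Fin n // SIF q.1}, InsertTop p.1.1 p.1.2 σ' := by
    rintro σ' ⟨hs, hdel⟩
    have hlast : σ' (Fin.last n) ≠ Fin.last n := by
      intro he
      refine hs (Fin.last n) (Fin.last n) ⟨Fin.last n, by simp⟩ ?_ ?_
      · intro hu
        have h0 : (0 : Fin (n + 1)) ∈ Finset.Icc (Fin.last n) (Fin.last n) :=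
          hu ▸ Finset.mem_univ _
        rw [Finset.mem_Icc] at h0
        have := Fin.le_def.mp h0.1
        simp [Fin.last] at this
        omega
      · rw [stab_iff]
        intro x hx
        rw [Finset.mem_Icc] at hx ⊢
        have hxl : x = Fin.last n := le_antisymm hx.2 hx.1
        subst hxl
        rw [he]
        exact ⟨le_rfl, le_rfl⟩
    have hne : σ'⁻¹ (Fin.last n) ≠ Fin.last n := by
      intro he
      apply hlast
      conv_lhs => rw [← he]
      simp
    obtain ⟨i, hi⟩ := Fin.exists_castSucc_eq.mpr hne
    have hii : σ' (Fin.castSucc i) = Fin.last n := by rw [hi]; simp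
    have hsif : SIF (del σ') := hdel _ (del_deleteTop σ')
    refine ⟨⟨(del σ', i), hsif⟩, insertTop_of_deleteTop (del_deleteTop σ') hii, ?_⟩
    rintro ⟨⟨σ₁, i₁⟩, hs₁⟩ h₁
    have hie : i₁ = i := Fin.castSucc_injective n (σ'.injective (h₁.1.trans hii.symm))
    have hσe : σ₁ = del σ' := deleteTop_unique (deleteTop_of_insertTop h₁) (del_deleteTop σ')
    exact Subtype.ext (Prod.ext hσe hie)
  refine ⟨?_, fun σ _ i => key2 σ i, key3, key4⟩
  have e1 : {q : Equiv.Perm (Fin n) × Fin n // SIF q.1} ≃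
      {σ' : Equiv.Perm (Fin (n + 1)) //
        SIF σ' ∧ ∀ τ : Equiv.Perm (Fin n), DeleteTop σ' τ → SIF τ} := by
    refine Equiv.ofBijective
      (fun q => ⟨ins q.1.1 q.1.2, key3 q.1.1 q.2 q.1.2 _ (ins_insertTop q.1.1 q.1.2)⟩)
      ⟨?_, ?_⟩
    · intro q₁ q₂ he
      have he' : ins q₁.1.1 q₁.1.2 = ins q₂.1.1 q₂.1.2 := congrArg Subtype.val he
      obtain ⟨p, hp, hup⟩ := key4 _ (key3 q₁.1.1 q₁.2 q₁.1.2 _ (ins_insertTop q₁.1.1 q₁.1.2))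
      have h1 := hup q₁ (ins_insertTop q₁.1.1 q₁.1.2)
      have h2 := hup q₂ (he' ▸ ins_insertTop q₂.1.1 q₂.1.2)
      rw [h1, h2]
    · rintro ⟨σ', hσ'⟩
      obtain ⟨p, hp, -⟩ := key4 σ' hσ'
      exact ⟨p, Subtype.ext (insertTop_unique p.1.1 p.1.2 hp).symm⟩
  have e2 : {q : Equiv.Perm (Fin n) × Fin n // SIF q.1} ≃
      {σ : Equiv.Perm (Fin n) // SIF σ} × Fin n :=
    { toFun := fun q => (⟨q.1.1, q.2⟩, q.1.2)
      invFun := fun p => ⟨(p.1.1, p.2), p.1.2⟩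
      left_inv := fun q => rfl
      right_inv := fun p => rfl }
  rw [← Nat.card_congr e1, Nat.card_congr e2, Nat.card_prod, Nat.card_eq_fintype_card (α := Fin n),
    Fintype.card_fin, mul_comm]
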